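/- arXiv:1710.09771 — 3 statements merged into one kernel-verified Lean document; each statement's English description precedes it below -/
import Mathlib

section
/- Suppose m = d, b and σ satisfy the Lipschitz assumption, and a = σσ' is uniformly elliptic. Let x* be a periodic solution of the DDE with orbit 𝐎 and let 𝐃 be a bounded domain in 𝐂 containing 𝐎. Then V̄ < ∞ and V̲ < ∞. -/
open MeasureTheory Set Metric
open scoped ENNReal

noncomputable section

/-- `ℝ^d`. -/
abbrev Vec (d : ℕ) := EuclideanSpace ℝ (Fin d)

/-- The state space `𝐂 = C([-τ,0],ℝ^d)`. -/
abbrev Hist (τ : ℝ) (d : ℕ) := C(Icc (-τ) (0:ℝ), Vec d)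

/-- The path space `C([-τ,T],ℝ^d)`. -/
abbrev Traj (τ T : ℝ) (d : ℕ) := C(Icc (-τ) T, Vec d)

/-- Matrix acting on a vector. -/
def matVec {d m : ℕ} (M : Matrix (Fin d) (Fin m) ℝ) (v : Vec m) : Vec d :=
  WithLp.toLp 2 (fun i => ∑ j, M i j * v j)

/-- Squared Frobenius norm of a matrix. -/
def frobSq {d m : ℕ} (M : Matrix (Fin d) (Fin m) ℝ) : ℝ := ∑ i, ∑ j, (M i j) ^ 2

/-- Frobenius norm of a matrix. -/
def frobNorm {d m : ℕ} (M : Matrix (Fin d) (Fin m) ℝ) : ℝ := Real.sqrt (frobSq M)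

/-- Evaluation of a path at a time `t ∈ [-τ,T]` (clamped). -/
def ev {d : ℕ} {τ T : ℝ} (h : -τ ≤ T) (x : Traj τ T d) (t : ℝ) : Vec d :=
  x (projIcc (-τ) T h t)

/-- The history segment `x_t ∈ 𝐂` of a path `x ∈ C([-τ,T],ℝ^d)`, for `t ∈ [0,T]`. -/
def seg {d : ℕ} {τ T : ℝ} (h : -τ ≤ T) (x : Traj τ T d) (t : ℝ) : Hist τ d :=
  ⟨fun s => x (projIcc (-τ) T h (t + s.1)),
    x.continuous.comp <| continuous_projIcc.comp <| continuous_const.add continuous_subtype_val⟩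

/-- The uniform Lipschitz assumption on the coefficients:
`|b(φ)−b(ψ)|² + |σ(φ)−σ(ψ)|² ≤ κ₁ ‖φ−ψ‖²`. -/
def LipCoeff {d m : ℕ} {τ : ℝ} (b : Hist τ d → Vec d)
    (σ' : Hist τ d → Matrix (Fin d) (Fin m) ℝ) (κ₁ : ℝ) : Prop :=
  ∀ φ ψ : Hist τ d, ‖b φ - b ψ‖ ^ 2 + frobSq (σ' φ - σ' ψ) ≤ κ₁ * ‖φ - ψ‖ ^ 2

/-- The linear growth bound `|b(φ)|² + |σ(φ)|² ≤ κ₂ (1 + ‖φ‖²)`. -/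
def GrowthCoeff {d m : ℕ} {τ : ℝ} (b : Hist τ d → Vec d)
    (σ' : Hist τ d → Matrix (Fin d) (Fin m) ℝ) (κ₂ : ℝ) : Prop :=
  ∀ φ : Hist τ d, ‖b φ‖ ^ 2 + frobSq (σ' φ) ≤ κ₂ * (1 + ‖φ‖ ^ 2)

/-- The set `U_T(x)` of controls `u ∈ L²([0,T],ℝ^m)` satisfying
`x(t) = x(0) + ∫₀ᵗ b(x_s) ds + ∫₀ᵗ σ(x_s) u(s) ds` for `t ∈ [0,T]`. -/
def controls {d m : ℕ} {τ T : ℝ} (h : -τ ≤ T) (b : Hist τ d → Vec d)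
    (σ' : Hist τ d → Matrix (Fin d) (Fin m) ℝ) (x : Traj τ T d) : Set (ℝ → Vec m) :=
  {u | MemLp u 2 (volume.restrict (Icc 0 T)) ∧
    ∀ t ∈ Icc (0:ℝ) T,
      ev h x t = ev h x 0 + (∫ s in (0:ℝ)..t, b (seg h x s)) +
        ∫ s in (0:ℝ)..t, matVec (σ' (seg h x s)) (u s)}

/-- The rate function `I_T(x) = inf_{u ∈ U_T(x)} ½∫₀ᵀ |u(s)|² ds` (with value `∞` if
`U_T(x) = ∅`). -/
def rate {d m : ℕ} {τ T : ℝ} (h : -τ ≤ T) (b : Hist τ d → Vec d)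
    (σ' : Hist τ d → Matrix (Fin d) (Fin m) ℝ) (x : Traj τ T d) : ℝ≥0∞ :=
  ⨅ (u : ℝ → Vec m) (_ : u ∈ controls h b σ' x),
    ENNReal.ofReal ((1/2) * ∫ s in (0:ℝ)..T, ‖u s‖ ^ 2)

open Classical in
/-- The rate function `I_T^φ(x)`, which is `I_T(x)` if `x₀ = φ` and `∞` otherwise. -/
def rateAt {d m : ℕ} {τ T : ℝ} (h : -τ ≤ T) (b : Hist τ d → Vec d)
    (σ' : Hist τ d → Matrix (Fin d) (Fin m) ℝ) (φ : Hist τ d) (x : Traj τ T d) : ℝ≥0∞ :=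
  if seg h x 0 = φ then rate h b σ' x else ⊤

/-- The history segment `x_t ∈ 𝐂` of a function `x ∈ C(ℝ,ℝ^d)` (used for functions on
`[-τ,∞)`, extended continuously to `ℝ`). -/
def segF {d : ℕ} (τ : ℝ) (x : C(ℝ, Vec d)) (t : ℝ) : Hist τ d :=
  ⟨fun s => x (t + s.1), x.continuous.comp <| continuous_const.add continuous_subtype_val⟩

/-- `x` is a solution of the DDE `x(t) = x(0) + ∫₀ᵗ b(x_s) ds`, `t ≥ 0`. -/
def IsDDESol {d : ℕ} (τ : ℝ) (b : Hist τ d → Vec d) (x : C(ℝ, Vec d)) : Prop :=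
  ∀ t : ℝ, 0 ≤ t → x t = x 0 + ∫ s in (0:ℝ)..t, b (segF τ x s)

/-- `x` is a periodic solution of the DDE with period `p`. -/
def IsPeriodicSol {d : ℕ} (τ : ℝ) (b : Hist τ d → Vec d) (x : C(ℝ, Vec d)) (p : ℝ) : Prop :=
  IsDDESol τ b x ∧ 0 < p ∧ ∀ t : ℝ, -τ ≤ t → x (t + p) = x t

/-- The orbit `𝐎 = {x*_t : t ∈ [0,p)} ⊂ 𝐂` of a periodic solution. -/
def orbit {d : ℕ} (τ : ℝ) (x : C(ℝ, Vec d)) (p : ℝ) : Set (Hist τ d) :=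
  (segF τ x) '' Ico 0 p

/-- Uniform ellipticity of `a = σσ'`: `ν' a(φ) ν ≥ c |ν|²`. -/
def UnifElliptic {d : ℕ} {τ : ℝ} (σ' : Hist τ d → Matrix (Fin d) (Fin d) ℝ) (c : ℝ) : Prop :=
  ∀ (φ : Hist τ d) (ν : Fin d → ℝ),
    c * (∑ i, ν i ^ 2) ≤ dotProduct ν ((σ' φ * Matrix.transpose (σ' φ)).mulVec ν)

/-- The quasipotential `V(ψ) = inf { I_T(x) : T > 0, x₀ ∈ 𝐎, x_T = ψ }`. -/
def quasipot {d m : ℕ} {τ : ℝ} (hτ : 0 < τ) (b : Hist τ d → Vec d)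
    (σ' : Hist τ d → Matrix (Fin d) (Fin m) ℝ) (O : Set (Hist τ d)) (ψ : Hist τ d) : ℝ≥0∞ :=
  ⨅ (T : ℝ) (hT : 0 < T) (x : Traj τ T d)
    (_ : seg (show -τ ≤ T by linarith) x 0 ∈ O ∧ seg (show -τ ≤ T by linarith) x T = ψ),
    rate (show -τ ≤ T by linarith) b σ' x

/-- `V̄ = inf { V(ψ) : ψ ∉ cl(𝐃) }`. -/
def Vbar {d m : ℕ} {τ : ℝ} (hτ : 0 < τ) (b : Hist τ d → Vec d)
    (σ' : Hist τ d → Matrix (Fin d) (Fin m) ℝ) (O D : Set (Hist τ d)) : ℝ≥0∞ :=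
  ⨅ (ψ : Hist τ d) (_ : ψ ∉ closure D), quasipot hτ b σ' O ψ

/-- `V_η = inf { V(ψ) : ψ ∈ 𝐁(𝐃ᶜ,η) }`. -/
def Veta {d m : ℕ} {τ : ℝ} (hτ : 0 < τ) (b : Hist τ d → Vec d)
    (σ' : Hist τ d → Matrix (Fin d) (Fin m) ℝ) (O D : Set (Hist τ d)) (η : ℝ) : ℝ≥0∞ :=
  ⨅ (ψ : Hist τ d) (_ : infDist ψ Dᶜ < η), quasipot hτ b σ' O ψ

/-- `V̲ = lim_{η→0} V_η`; since `η ↦ V_η` is nondecreasing as `η → 0`, the limit equals the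
supremum over `η > 0`. -/
def Vlower {d m : ℕ} {τ : ℝ} (hτ : 0 < τ) (b : Hist τ d → Vec d)
    (σ' : Hist τ d → Matrix (Fin d) (Fin m) ℝ) (O D : Set (Hist τ d)) : ℝ≥0∞ :=
  ⨆ (η : ℝ) (_ : 0 < η), Veta hτ b σ' O D η


section AuxStmt13

variable {d : ℕ}

lemma matVec_smul_right {M : Matrix (Fin d) (Fin d) ℝ} (r : ℝ) (v : Vec d) :
    matVec M (r • v) = r • matVec M v := by
  ext i
  simp only [matVec, PiLp.toLp_apply, PiLp.smul_apply, smul_eq_mul, Finset.mul_sum]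
  exact Finset.sum_congr rfl fun j _ => by ring

lemma matVec_mulMat (M N : Matrix (Fin d) (Fin d) ℝ) (v : Vec d) :
    matVec (M * N) v = matVec M (matVec N v) := by
  ext i
  simp only [matVec, PiLp.toLp_apply, Matrix.mul_apply, Finset.sum_mul, Finset.mul_sum]
  rw [Finset.sum_comm]
  exact Finset.sum_congr rfl fun j _ => Finset.sum_congr rfl fun k _ => by ring

lemma matVec_smul_mat (r : ℝ) (M : Matrix (Fin d) (Fin d) ℝ) (v : Vec d) :
    matVec (r • M) v = r • matVec M v := by
  ext i
  simp only [matVec, PiLp.toLp_apply, Matrix.smul_apply, PiLp.smul_apply, smul_eq_mul, Finset.mul_sum]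
  exact Finset.sum_congr rfl fun j _ => by ring

lemma matVec_one (v : Vec d) : matVec (1 : Matrix (Fin d) (Fin d) ℝ) v = v := by
  ext i
  simp [matVec, Matrix.one_apply]

lemma frobSq_nonneg {m : ℕ} (M : Matrix (Fin d) (Fin m) ℝ) : 0 ≤ frobSq M :=
  Finset.sum_nonneg fun i _ => Finset.sum_nonneg fun j _ => sq_nonneg _

lemma entry_sq_le_frobSq {m : ℕ} (M : Matrix (Fin d) (Fin m) ℝ) (i : Fin d) (j : Fin m) :
    (M i j) ^ 2 ≤ frobSq M := by
  have h1 : (M i j) ^ 2 ≤ ∑ k, (M i k) ^ 2 :=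
    Finset.single_le_sum (f := fun k => (M i k) ^ 2) (fun k _ => sq_nonneg _)
      (Finset.mem_univ j)
  exact h1.trans (Finset.single_le_sum (f := fun l => ∑ k, (M l k) ^ 2)
    (fun k _ => Finset.sum_nonneg fun l _ => sq_nonneg _) (Finset.mem_univ i))

/-- From uniform ellipticity, the diffusion matrix has nonzero determinant. -/
lemma det_ne_zero_of_elliptic {τ : ℝ} {σ' : Hist τ d → Matrix (Fin d) (Fin d) ℝ} {c : ℝ}
    (hc : 0 < c) (hell : UnifElliptic σ' c) (φ : Hist τ d) : (σ' φ).det ≠ 0 := by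
  set A := σ' φ with hA
  have hker : ∀ ν : Fin d → ℝ, A.transpose.mulVec ν = 0 → ν = 0 := by
    intro ν hν
    have h := hell φ ν
    rw [← Matrix.mulVec_mulVec, hν, Matrix.mulVec_zero, dotProduct_zero] at h
    have hsum : ∑ i, ν i ^ 2 ≤ 0 := by
      have h0 : c * (∑ i, ν i ^ 2) ≤ c * 0 := by simpa using h
      exact le_of_mul_le_mul_left h0 hc
    have hzero : ∑ i, ν i ^ 2 = 0 :=
      le_antisymm hsum (Finset.sum_nonneg fun i _ => sq_nonneg _)
    funext i
    have hi := (Finset.sum_eq_zero_iff_of_nonneg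
      (fun i _ => sq_nonneg (ν i))).mp hzero i (Finset.mem_univ i)
    exact pow_eq_zero_iff two_ne_zero |>.mp hi
  have hinj : Function.Injective A.transpose.mulVec := by
    intro ν ν' hv
    have h0 : A.transpose.mulVec (ν - ν') = 0 := by
      rw [Matrix.mulVec_sub, hv, sub_self]
    exact sub_eq_zero.mp (hker _ h0)
  have hunit : IsUnit A.transpose := Matrix.mulVec_injective_iff_isUnit.mp hinj
  have hdet : IsUnit A.transpose.det := (Matrix.isUnit_iff_isUnit_det _).mp hunit
  rw [Matrix.det_transpose] at hdet
  exact isUnit_iff_ne_zero.mp hdet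

/-- The drift is Lipschitz, hence continuous. -/
lemma continuous_b_of_lip {m : ℕ} {τ : ℝ} {b : Hist τ d → Vec d}
    {σ' : Hist τ d → Matrix (Fin d) (Fin m) ℝ} {κ₁ : ℝ} (hκ₁ : 0 < κ₁)
    (hlip : LipCoeff b σ' κ₁) : Continuous b := by
  refine (LipschitzWith.of_dist_le_mul (K := ⟨Real.sqrt κ₁, Real.sqrt_nonneg _⟩) ?_).continuous
  intro φ ψ
  have h := hlip φ ψ
  have h1 : ‖b φ - b ψ‖ ^ 2 ≤ κ₁ * ‖φ - ψ‖ ^ 2 :=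
    le_trans (le_add_of_nonneg_right (frobSq_nonneg _)) h
  have h2 : ‖b φ - b ψ‖ ≤ Real.sqrt κ₁ * ‖φ - ψ‖ := by
    have := Real.sqrt_le_sqrt h1
    rwa [Real.sqrt_sq (norm_nonneg _), Real.sqrt_mul hκ₁.le,
      Real.sqrt_sq (norm_nonneg _)] at this
  rw [dist_eq_norm, dist_eq_norm]; exact h2

/-- The dispersion matrix is Lipschitz entrywise, hence continuous. -/
lemma continuous_sigma_of_lip {m : ℕ} {τ : ℝ} {b : Hist τ d → Vec d}
    {σ' : Hist τ d → Matrix (Fin d) (Fin m) ℝ} {κ₁ : ℝ} (hκ₁ : 0 < κ₁)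
    (hlip : LipCoeff b σ' κ₁) : Continuous σ' := by
  refine continuous_pi fun i => continuous_pi fun j => ?_
  refine (LipschitzWith.of_dist_le_mul (K := ⟨Real.sqrt κ₁, Real.sqrt_nonneg _⟩) ?_).continuous
  intro φ ψ
  have h := hlip φ ψ
  have h0 : (σ' φ i j - σ' ψ i j) ^ 2 ≤ frobSq (σ' φ - σ' ψ) := by
    have := entry_sq_le_frobSq (σ' φ - σ' ψ) i j
    simpa [Matrix.sub_apply] using this
  have h1 : (σ' φ i j - σ' ψ i j) ^ 2 ≤ κ₁ * ‖φ - ψ‖ ^ 2 :=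
    h0.trans (le_trans (le_add_of_nonneg_left (sq_nonneg _)) h)
  have h2 : |σ' φ i j - σ' ψ i j| ≤ Real.sqrt κ₁ * ‖φ - ψ‖ := by
    have := Real.sqrt_le_sqrt h1
    rwa [Real.sqrt_sq_eq_abs, Real.sqrt_mul hκ₁.le, Real.sqrt_sq (norm_nonneg _)] at this
  rw [Real.dist_eq, dist_eq_norm]; exact h2

end AuxStmt13

/-- Remark 3.5: `V̄` and `V̲` are finite. -/
theorem stmt_13 {d : ℕ} (hd : 0 < d) {τ : ℝ} (hτ : 0 < τ)
    (b : Hist τ d → Vec d) (σ' : Hist τ d → Matrix (Fin d) (Fin d) ℝ)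
    {κ₁ : ℝ} (hκ₁ : 0 < κ₁) (hlip : LipCoeff b σ' κ₁)
    {c : ℝ} (hc : 0 < c) (hell : UnifElliptic σ' c)
    (xs : C(ℝ, Vec d)) (p : ℝ) (hxs : IsPeriodicSol τ b xs p)
    (D : Set (Hist τ d)) (hDopen : IsOpen D) (hDconn : IsConnected D)
    (hDbdd : Bornology.IsBounded D) (hOD : orbit τ xs p ⊆ D) :
    Vbar hτ b σ' (orbit τ xs p) D < ⊤ ∧ Vlower hτ b σ' (orbit τ xs p) D < ⊤ := by
  obtain ⟨hsol, hp, hper⟩ := hxs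
  obtain ⟨M, hM⟩ := isBounded_iff_forall_norm_le.mp hDbdd.closure
  have hM0 : 0 ≤ M := by
    obtain ⟨φ0, hφ0⟩ := hDconn.nonempty
    exact le_trans (norm_nonneg φ0) (hM φ0 (subset_closure hφ0))
  set x0 : Vec d := xs 0 with hx0
  set e : Vec d := EuclideanSpace.single (⟨0, hd⟩ : Fin d) (1:ℝ) with he
  have hne : ‖e‖ = 1 := by rw [he, EuclideanSpace.norm_single]; norm_num
  set R : ℝ := (M + ‖x0‖ + 1) / τ with hR
  set w : Vec d := R • e with hw
  have hτT : -τ ≤ τ := by linarith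
  set f : ℝ → Vec d := fun t => xs (min t 0) + (max t 0) • w with hf
  have hfc : Continuous f :=
    (xs.continuous.comp (continuous_id.min continuous_const)).add
      ((continuous_id.max continuous_const).smul continuous_const)
  set x : Traj τ τ d := ⟨fun s => f s.1, hfc.comp continuous_subtype_val⟩ with hxdef
  -- the initial segment is on the orbit
  have hseg0 : seg hτT x 0 = segF τ xs 0 := by
    refine ContinuousMap.ext fun s => ?_
    show f ((projIcc (-τ) τ hτT (0 + s.1) : Icc (-τ) τ) : ℝ) = xs (0 + s.1)
    have hs : (0:ℝ) + s.1 ∈ Icc (-τ) τ := ⟨by linarith [s.2.1], by linarith [s.2.2]⟩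
    rw [projIcc_of_mem hτT hs]
    have hs0 : (0:ℝ) + s.1 ≤ 0 := by linarith [s.2.2]
    show xs (((0:ℝ) + s.1) ⊓ 0) + (((0:ℝ) + s.1) ⊔ 0) • w = xs (0 + s.1)
    rw [min_eq_left hs0, max_eq_right hs0]
    simp
  have horb : seg hτT x 0 ∈ orbit τ xs p := ⟨0, ⟨le_refl 0, hp⟩, hseg0.symm⟩
  -- final segment
  set ψ : Hist τ d := seg hτT x τ with hψ
  set pt : Icc (-τ) (0:ℝ) := ⟨0, ⟨neg_nonpos.mpr hτ.le, le_refl 0⟩⟩ with hpt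
  have hψval : ψ pt = x0 + (M + ‖x0‖ + 1) • e := by
    show f ((projIcc (-τ) τ hτT (τ + 0) : Icc (-τ) τ) : ℝ) = _
    have hmem : τ + (0:ℝ) ∈ Icc (-τ) τ := ⟨by linarith, by linarith⟩
    rw [projIcc_of_mem hτT hmem]
    have h1 : min (τ + (0:ℝ)) 0 = 0 := min_eq_right (by linarith)
    have h2 : max (τ + (0:ℝ)) 0 = τ := by rw [add_zero]; exact max_eq_left hτ.le
    have hτR : τ • w = (M + ‖x0‖ + 1) • e := by
      rw [hw, smul_smul, hR, mul_div_cancel₀ _ (ne_of_gt hτ)]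
    show xs ((τ + (0:ℝ)) ⊓ 0) + ((τ + (0:ℝ)) ⊔ 0) • w = x0 + (M + ‖x0‖ + 1) • e
    rw [h1, h2, hτR, ← hx0]
  have hψn : ψ ∉ closure D := by
    intro hmem
    have h1 : ‖ψ‖ ≤ M := hM ψ hmem
    have h2 : ‖ψ pt‖ ≤ ‖ψ‖ := ContinuousMap.norm_coe_le_norm ψ pt
    rw [hψval] at h2
    have h4 : ‖(M + ‖x0‖ + 1) • e‖ = M + ‖x0‖ + 1 := by
      rw [norm_smul, hne, mul_one, Real.norm_eq_abs,
        abs_of_nonneg (by linarith [norm_nonneg x0])]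
    have h6 := norm_sub_le (x0 + (M + ‖x0‖ + 1) • e) x0
    have h7 : (x0 + (M + ‖x0‖ + 1) • e) - x0 = (M + ‖x0‖ + 1) • e := by abel
    rw [h7, h4] at h6
    linarith
  -- continuity of the segment map
  have hsegc : Continuous (fun s : ℝ => seg hτT x s) := by
    let G : C(ℝ × Icc (-τ) (0:ℝ), Vec d) :=
      ⟨fun q => f ((projIcc (-τ) τ hτT (q.1 + q.2.1) : Icc (-τ) τ) : ℝ),
        hfc.comp <| continuous_subtype_val.comp <| continuous_projIcc.comp
          (continuous_fst.add (continuous_subtype_val.comp continuous_snd))⟩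
    have hEq : (fun s : ℝ => seg hτT x s) = fun s => G.curry s := by
      funext s; ext σ; rfl
    rw [hEq]
    exact G.curry.continuous
  have hbc : Continuous b := continuous_b_of_lip hκ₁ hlip
  have hσc : Continuous σ' := continuous_sigma_of_lip hκ₁ hlip
  set A : ℝ → Matrix (Fin d) (Fin d) ℝ := fun s => σ' (seg hτT x s) with hA
  have hAc : Continuous A := hσc.comp hsegc
  have hdet : ∀ s, (A s).det ≠ 0 := fun s => det_ne_zero_of_elliptic hc hell _
  set v : ℝ → Vec d := fun s => w - b (seg hτT x s) with hv
  have hvc : Continuous v := continuous_const.sub (hbc.comp hsegc)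
  -- the control
  set u : ℝ → Vec d := fun s => ((A s).det)⁻¹ • matVec ((A s).adjugate) (v s) with hu
  have hmvc : Continuous (fun s => matVec ((A s).adjugate) (v s)) := by
    unfold matVec
    refine (PiLp.continuous_toLp (p := 2) (β := fun _ : Fin d => ℝ)).comp ?_
    apply continuous_pi
    intro i
    apply continuous_finset_sum
    intro j _
    exact ((continuous_apply j).comp ((continuous_apply i).comp hAc.matrix_adjugate)).mul
      ((continuous_apply j).comp ((PiLp.continuous_ofLp 2 _).comp hvc))
  have huc : Continuous u := ((hAc.matrix_det).inv₀ hdet).smul hmvc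
  have hkey : ∀ s, matVec (A s) (u s) = v s := by
    intro s
    calc matVec (A s) (((A s).det)⁻¹ • matVec ((A s).adjugate) (v s))
        = ((A s).det)⁻¹ • matVec (A s) (matVec ((A s).adjugate) (v s)) :=
          matVec_smul_right _ _
      _ = ((A s).det)⁻¹ • matVec ((A s) * (A s).adjugate) (v s) := by
          rw [matVec_mulMat]
      _ = ((A s).det)⁻¹ • matVec ((A s).det • (1 : Matrix (Fin d) (Fin d) ℝ)) (v s) := by
          rw [Matrix.mul_adjugate]
      _ = ((A s).det)⁻¹ • ((A s).det • matVec (1 : Matrix (Fin d) (Fin d) ℝ) (v s)) := by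
          rw [matVec_smul_mat]
      _ = v s := by
          rw [matVec_one, smul_smul, inv_mul_cancel₀ (hdet s), one_smul]
  -- the control is in L²
  obtain ⟨C, hC⟩ := (isCompact_Icc (a := (0:ℝ)) (b := τ)).exists_bound_of_continuousOn
    huc.continuousOn
  haveI : IsFiniteMeasure (volume.restrict (Icc (0:ℝ) τ)) :=
    ⟨by rw [Measure.restrict_apply_univ]; exact measure_Icc_lt_top⟩
  have hmem : MemLp u 2 (volume.restrict (Icc (0:ℝ) τ)) :=
    MemLp.of_bound huc.aestronglyMeasurable C
      ((ae_restrict_iff' measurableSet_Icc).mpr (Filter.Eventually.of_forall hC))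
  -- the control drives the path
  have hctrl : u ∈ controls hτT b σ' x := by
    refine ⟨hmem, ?_⟩
    intro t ht
    have htI : t ∈ Icc (-τ) τ := ⟨le_trans (neg_nonpos.mpr hτ.le) ht.1, ht.2⟩
    have hev_t : ev hτT x t = x0 + t • w := by
      show f ((projIcc (-τ) τ hτT t : Icc (-τ) τ) : ℝ) = _
      rw [projIcc_of_mem hτT htI]
      simp [hf, min_eq_right ht.1, max_eq_left ht.1, hx0]
    have hev_0 : ev hτT x 0 = x0 := by
      show f ((projIcc (-τ) τ hτT 0 : Icc (-τ) τ) : ℝ) = _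
      rw [projIcc_of_mem hτT ⟨by linarith, by linarith⟩]
      simp [hf, hx0]
    have hint : (∫ s in (0:ℝ)..t, matVec (σ' (seg hτT x s)) (u s)) =
        t • w - ∫ s in (0:ℝ)..t, b (seg hτT x s) := by
      have h1 : (∫ s in (0:ℝ)..t, matVec (σ' (seg hτT x s)) (u s)) =
          ∫ s in (0:ℝ)..t, v s :=
        intervalIntegral.integral_congr fun s _ => hkey s
      rw [h1]
      simp only [hv]
      have hwint : IntervalIntegrable (fun _ : ℝ => w) volume 0 t :=
        intervalIntegrable_const
      have hbint : IntervalIntegrable (fun s => b (seg hτT x s)) volume 0 t :=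
        (hbc.comp hsegc).intervalIntegrable 0 t
      rw [intervalIntegral.integral_sub hwint hbint,
        intervalIntegral.integral_const, sub_zero]
    rw [hev_t, hev_0, hint]
    abel
  have hrate : rate hτT b σ' x < ⊤ :=
    lt_of_le_of_lt (iInf₂_le u hctrl) ENNReal.ofReal_lt_top
  have hquasi : quasipot hτ b σ' (orbit τ xs p) ψ < ⊤ := by
    refine lt_of_le_of_lt ?_ hrate
    refine iInf_le_of_le τ ?_
    refine iInf_le_of_le hτ ?_
    refine iInf_le_of_le x ?_
    exact iInf_le_of_le ⟨horb, rfl⟩ le_rfl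
  constructor
  · exact lt_of_le_of_lt (iInf₂_le ψ hψn) hquasi
  · have hψD : ψ ∈ Dᶜ := fun hmem => hψn (subset_closure hmem)
    refine lt_of_le_of_lt (iSup₂_le fun η hη => ?_) hquasi
    exact iInf₂_le ψ (by rw [infDist_zero_of_mem hψD]; exact hη)
end
end

section
/- Let T > 0, let F be a closed subset of C([-τ,T],ℝ^d), let 𝐊 ⊂ 𝐂, and for j ≥ 1 define f_j(x) = j·min(d_T(x,F), 1). Then liminf_{j→∞} inf_{φ∈𝐊} inf_{x ∈ C([-τ,T],ℝ^d)} { I_T^φ(x) + f_j(x) } ≥ lim_{η→0} inf_{φ∈𝐊} I_T^φ(F^η), where F^η = { x ∈ C([-τ,T],ℝ^d) : d_T(x,F) ≤ η } (the limit in η exists by monotonicity). -/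
open MeasureTheory Set Metric
open scoped ENNReal

noncomputable section

/-- key step in the proof of the uniform LDP upper bound:
`liminf_{j→∞} inf_{φ∈𝐊} inf_x {I_T^φ(x) + f_j(x)} ≥ lim_{η→0} inf_{φ∈𝐊} I_T^φ(F^η)`, where
`f_j(x) = j (d_T(x,F) ∧ 1)` and `F^η = {x : d_T(x,F) ≤ η}` (the limit in `η` equals the
supremum over `η > 0` by monotonicity). -/
theorem stmt_16 {d m : ℕ} (hd : 0 < d) (hm : 0 < m) {τ T : ℝ} (hτ : 0 < τ) (hT : 0 < T)
    (h : -τ ≤ T)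
    (b : Hist τ d → Vec d) (σ' : Hist τ d → Matrix (Fin d) (Fin m) ℝ)
    (hb : Continuous b) (hσ : Continuous σ')
    (F : Set (Traj τ T d)) (hF : IsClosed F)
    (K : Set (Hist τ d)) :
    (⨆ (η : ℝ) (_ : 0 < η),
        ⨅ (φ : Hist τ d) (_ : φ ∈ K), ⨅ (x : Traj τ T d) (_ : infDist x F ≤ η),
          rateAt h b σ' φ x) ≤
      Filter.liminf
        (fun j : ℕ =>
          ⨅ (φ : Hist τ d) (_ : φ ∈ K), ⨅ (x : Traj τ T d),
            (rateAt h b σ' φ x + ENNReal.ofReal (j * min (infDist x F) 1)))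
        Filter.atTop := by
  apply iSup₂_le
  intro η hη
  set L : ℝ≥0∞ := ⨅ (φ : Hist τ d) (_ : φ ∈ K), ⨅ (x : Traj τ T d) (_ : infDist x F ≤ η),
    rateAt h b σ' φ x with hLdef
  have hmin : 0 < min η 1 := lt_min hη one_pos
  have hc : Filter.Tendsto (fun j : ℕ => ENNReal.ofReal (j * min η 1)) Filter.atTop (nhds ⊤) := by
    apply ENNReal.tendsto_ofReal_atTop.comp
    exact Filter.Tendsto.atTop_mul_const hmin tendsto_natCast_atTop_atTop
  have hlim : Filter.Tendsto (fun j : ℕ => min L (ENNReal.ofReal (j * min η 1)))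
      Filter.atTop (nhds L) := by
    have := (tendsto_const_nhds :
      Filter.Tendsto (fun _ : ℕ => L) Filter.atTop (nhds L)).min hc
    simpa using this
  calc L = Filter.liminf (fun j : ℕ => min L (ENNReal.ofReal (j * min η 1))) Filter.atTop :=
        hlim.liminf_eq.symm
    _ ≤ _ := by
        refine Filter.liminf_le_liminf ?_ (by isBoundedDefault) (by isBoundedDefault)
        apply Filter.Eventually.of_forall
        intro j
        apply le_iInf₂
        intro φ hφ
        apply le_iInf
        intro x
        by_cases hdx : infDist x F ≤ η
        · refine (min_le_left _ _).trans ?_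
          refine le_trans ?_ le_self_add
          exact (iInf₂_le φ hφ).trans (iInf₂_le x hdx)
        · refine (min_le_right _ _).trans ?_
          refine le_trans ?_ le_add_self
          apply ENNReal.ofReal_le_ofReal
          have : min η 1 ≤ min (infDist x F) 1 :=
            min_le_min (le_of_lt (not_le.mp hdx)) le_rfl
          exact mul_le_mul_of_nonneg_left this (Nat.cast_nonneg j)
end
end

section
/- Suppose b and σ satisfy the Lipschitz assumption. Let T > 0, let {xⁿ} be a sequence in C([-τ,T],ℝ^d) converging uniformly to x ∈ C([-τ,T],ℝ^d), and let {uⁿ} be a sequence in L²([0,T],ℝ^m) with uⁿ ∈ U_T(xⁿ) for each n, converging weakly in L²([0,T],ℝ^m) to u. Then u ∈ U_T(x), i.e., x(t) = x(0) + ∫₀ᵗ b(x_s)ds + ∫₀ᵗ σ(x_s)u(s)ds for all t ∈ [0,T]. -/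
open MeasureTheory Set Metric
open scoped ENNReal

noncomputable section

open scoped RealInnerProductSpace

set_option maxHeartbeats 1000000

instance {d m : ℕ} : TopologicalSpace.PseudoMetrizableSpace (Matrix (Fin d) (Fin m) ℝ) :=
  inferInstanceAs (TopologicalSpace.PseudoMetrizableSpace (Fin d → Fin m → ℝ))

namespace S17

/-- The `i`-th row of a matrix, as a vector. -/
def row {d m : ℕ} (M : Matrix (Fin d) (Fin m) ℝ) (i : Fin d) : Vec m := WithLp.toLp 2 (fun j => M i j)

lemma frobSq_nonneg {d m : ℕ} (M : Matrix (Fin d) (Fin m) ℝ) : 0 ≤ frobSq M :=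
  Finset.sum_nonneg fun _ _ => Finset.sum_nonneg fun _ _ => sq_nonneg _

lemma frobNorm_nonneg {d m : ℕ} (M : Matrix (Fin d) (Fin m) ℝ) : 0 ≤ frobNorm M :=
  Real.sqrt_nonneg _

lemma norm_row_le {d m : ℕ} (M : Matrix (Fin d) (Fin m) ℝ) (i : Fin d) :
    ‖row M i‖ ≤ frobNorm M := by
  rw [EuclideanSpace.norm_eq]
  apply Real.sqrt_le_sqrt
  calc (∑ j, ‖row M i j‖ ^ 2) = ∑ j, (M i j)^2 := by simp [row, sq_abs]
    _ ≤ frobSq M := Finset.single_le_sum (f := fun i => ∑ j, (M i j)^2)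
        (fun _ _ => Finset.sum_nonneg fun _ _ => sq_nonneg _) (Finset.mem_univ i)

lemma matVec_apply {d m : ℕ} (M : Matrix (Fin d) (Fin m) ℝ) (v : Vec m) (i : Fin d) :
    matVec M v i = ⟪v, row M i⟫ := by
  rw [PiLp.inner_apply]
  simp [matVec, row, RCLike.inner_apply, mul_comm]

lemma abs_matVec_apply_le {d m : ℕ} (M : Matrix (Fin d) (Fin m) ℝ) (v : Vec m) (i : Fin d) :
    |matVec M v i| ≤ frobNorm M * ‖v‖ := by
  rw [matVec_apply]
  calc |⟪v, row M i⟫| ≤ ‖v‖ * ‖row M i‖ := abs_real_inner_le_norm _ _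
    _ ≤ ‖v‖ * frobNorm M := mul_le_mul_of_nonneg_left (norm_row_le M i) (norm_nonneg _)
    _ = frobNorm M * ‖v‖ := mul_comm _ _

lemma norm_matVec_le {d m : ℕ} (M : Matrix (Fin d) (Fin m) ℝ) (v : Vec m) :
    ‖matVec M v‖ ≤ Real.sqrt d * (frobNorm M * ‖v‖) := by
  have h0 : (0:ℝ) ≤ frobNorm M * ‖v‖ := mul_nonneg (frobNorm_nonneg M) (norm_nonneg _)
  rw [EuclideanSpace.norm_eq]
  have : (∑ i, ‖matVec M v i‖ ^ 2) ≤ ∑ _i : Fin d, (frobNorm M * ‖v‖)^2 := by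
    refine Finset.sum_le_sum fun i _ => ?_
    rw [Real.norm_eq_abs]
    exact pow_le_pow_left₀ (abs_nonneg _) (abs_matVec_apply_le M v i) 2
  refine (Real.sqrt_le_sqrt this).trans ?_
  rw [Finset.sum_const, Finset.card_univ, Fintype.card_fin, nsmul_eq_mul,
    Real.sqrt_mul (by positivity), Real.sqrt_sq h0]

variable {d m : ℕ} {τ T t : ℝ} {κ₁ : ℝ} {b : Hist τ d → Vec d}
  {σ' : Hist τ d → Matrix (Fin d) (Fin m) ℝ}

lemma b_lip (hκ : 0 ≤ κ₁) (hlip : LipCoeff b σ' κ₁) (φ ψ : Hist τ d) :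
    ‖b φ - b ψ‖ ≤ Real.sqrt κ₁ * ‖φ - ψ‖ := by
  have h1 : ‖b φ - b ψ‖ ^ 2 ≤ κ₁ * ‖φ - ψ‖ ^ 2 :=
    le_trans (le_add_of_nonneg_right (frobSq_nonneg _)) (hlip φ ψ)
  have := Real.sqrt_le_sqrt h1
  rwa [Real.sqrt_sq (norm_nonneg _), Real.sqrt_mul hκ, Real.sqrt_sq (norm_nonneg _)] at this

lemma σ_lip (hκ : 0 ≤ κ₁) (hlip : LipCoeff b σ' κ₁) (φ ψ : Hist τ d) :
    frobNorm (σ' φ - σ' ψ) ≤ Real.sqrt κ₁ * ‖φ - ψ‖ := by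
  have h1 : frobSq (σ' φ - σ' ψ) ≤ κ₁ * ‖φ - ψ‖ ^ 2 :=
    le_trans (le_add_of_nonneg_left (sq_nonneg _)) (hlip φ ψ)
  have := Real.sqrt_le_sqrt h1
  rwa [Real.sqrt_mul hκ, Real.sqrt_sq (norm_nonneg _)] at this

lemma norm_seg_sub_seg (h : -τ ≤ T) (x y : Traj τ T d) (t : ℝ) :
    ‖seg h x t - seg h y t‖ ≤ dist x y := by
  rw [← dist_eq_norm]
  refine (ContinuousMap.dist_le (dist_nonneg : (0:ℝ) ≤ dist x y)).2 fun s => ?_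
  have : dist ((seg h x t) s) ((seg h y t) s) = dist (x (projIcc (-τ) T h (t + s.1)))
      (y (projIcc (-τ) T h (t + s.1))) := rfl
  rw [this]
  exact ContinuousMap.dist_apply_le_dist _

lemma continuous_seg (h : -τ ≤ T) (x : Traj τ T d) : Continuous (fun t => seg h x t) := by
  let F : C(ℝ × Icc (-τ) (0:ℝ), Vec d) :=
    ⟨fun p => x (projIcc (-τ) T h (p.1 + p.2.1)),
      x.continuous.comp <| continuous_projIcc.comp <|
        (continuous_fst.add (continuous_subtype_val.comp continuous_snd))⟩
  have : (fun t => seg h x t) = fun t => ContinuousMap.curry F t :=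
    funext fun t => ContinuousMap.ext fun s => rfl
  rw [this]
  exact (ContinuousMap.curry F).continuous

lemma continuous_b_seg (hκ : 0 ≤ κ₁) (hlip : LipCoeff b σ' κ₁) (h : -τ ≤ T) (x : Traj τ T d) :
    Continuous (fun s => b (seg h x s)) := by
  have hb : Continuous b := by
    refine (LipschitzWith.of_dist_le_mul (K := Real.toNNReal (Real.sqrt κ₁)) ?_).continuous
    intro φ ψ
    rw [dist_eq_norm, dist_eq_norm, Real.coe_toNNReal _ (Real.sqrt_nonneg _)]
    exact b_lip hκ hlip φ ψ
  exact hb.comp (continuous_seg h x)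

lemma continuous_row_σ_seg (hκ : 0 ≤ κ₁) (hlip : LipCoeff b σ' κ₁) (h : -τ ≤ T)
    (x : Traj τ T d) (i : Fin d) :
    Continuous (fun s => row (σ' (seg h x s)) i) := by
  have hσ : Continuous (fun φ => row (σ' φ) i) := by
    refine (LipschitzWith.of_dist_le_mul (K := Real.toNNReal (Real.sqrt κ₁)) ?_).continuous
    intro φ ψ
    rw [dist_eq_norm, dist_eq_norm, Real.coe_toNNReal _ (Real.sqrt_nonneg _)]
    have h1 : row (σ' φ) i - row (σ' ψ) i = row (σ' φ - σ' ψ) i := rfl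
    calc ‖row (σ' φ) i - row (σ' ψ) i‖ = ‖row (σ' φ - σ' ψ) i‖ := by rw [h1]
      _ ≤ frobNorm (σ' φ - σ' ψ) := norm_row_le _ i
      _ ≤ Real.sqrt κ₁ * ‖φ - ψ‖ := σ_lip hκ hlip φ ψ
  exact hσ.comp (continuous_seg h x)

lemma continuous_σ_seg (hκ : 0 ≤ κ₁) (hlip : LipCoeff b σ' κ₁) (h : -τ ≤ T)
    (x : Traj τ T d) : Continuous (fun s => σ' (seg h x s)) := by
  refine continuous_pi fun i => continuous_pi fun j => ?_
  exact (EuclideanSpace.proj (𝕜 := ℝ) j).continuous.comp (continuous_row_σ_seg hκ hlip h x i)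

lemma restrict_eq_intervalIntegral (hT : 0 ≤ T) (f : ℝ → ℝ) :
    ∫ s, f s ∂(volume.restrict (Icc (0:ℝ) T)) = ∫ s in (0:ℝ)..T, f s := by
  rw [intervalIntegral.integral_of_le hT, ← integral_Icc_eq_integral_Ioc]

lemma inner_toLp_left (hT : 0 ≤ T) {w : ℝ → Vec m}
    (hw : MemLp w 2 (volume.restrict (Icc (0:ℝ) T)))
    (f : Lp (Vec m) 2 (volume.restrict (Icc (0:ℝ) T))) :
    ⟪hw.toLp w, f⟫ = ∫ s in (0:ℝ)..T, ⟪w s, f s⟫ := by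
  rw [L2.inner_def, ← restrict_eq_intervalIntegral hT]
  exact integral_congr_ae ((hw.coeFn_toLp).mono fun s hs => by simp only [hs])

lemma inner_toLp_toLp (hT : 0 ≤ T) {w r : ℝ → Vec m}
    (hw : MemLp w 2 (volume.restrict (Icc (0:ℝ) T)))
    (hr : MemLp r 2 (volume.restrict (Icc (0:ℝ) T))) :
    ⟪hw.toLp w, hr.toLp r⟫ = ∫ s in (0:ℝ)..T, ⟪w s, r s⟫ := by
  rw [inner_toLp_left hT hw]
  rw [← restrict_eq_intervalIntegral hT, ← restrict_eq_intervalIntegral hT]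
  exact integral_congr_ae ((hr.coeFn_toLp).mono fun s hs => by simp only [hs])

lemma intervalIntegral_inner_indicator (ht0 : 0 ≤ t) (htT : t ≤ T) (w r : ℝ → Vec m) :
    ∫ s in (0:ℝ)..T, ⟪w s, ((Ioc (0:ℝ) t).indicator r) s⟫ = ∫ s in (0:ℝ)..t, ⟪w s, r s⟫ := by
  have h1 : ∀ s, ⟪w s, ((Ioc (0:ℝ) t).indicator r) s⟫
      = (Ioc (0:ℝ) t).indicator (fun s => ⟪w s, r s⟫) s := by
    intro s
    by_cases hs : s ∈ Ioc (0:ℝ) t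
    · rw [Set.indicator_of_mem hs, Set.indicator_of_mem hs]
    · rw [Set.indicator_of_notMem hs, Set.indicator_of_notMem hs, inner_zero_right]
  simp only [h1]
  rw [intervalIntegral.integral_of_le (ht0.trans htT), intervalIntegral.integral_of_le ht0,
    setIntegral_indicator measurableSet_Ioc, Set.Ioc_inter_Ioc, max_self,
    min_eq_right htT]

lemma norm_toLp_le {r : ℝ → Vec m}
    (hmem : MemLp r 2 (volume.restrict (Icc (0:ℝ) T))) {C : ℝ} (hC0 : 0 ≤ C)
    (hC : ∀ s, ‖r s‖ ≤ C) :
    ‖hmem.toLp r‖ ≤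
      (measureUnivNNReal (volume.restrict (Icc (0:ℝ) T)) : ℝ) ^ ((2:ℝ≥0∞).toReal⁻¹) * C := by
  haveI : Fact ((volume : Measure ℝ) (Icc (0:ℝ) T) < ⊤) := ⟨measure_Icc_lt_top⟩
  apply Lp.norm_le_of_ae_bound hC0
  filter_upwards [hmem.coeFn_toLp] with s hs
  rw [hs]; exact hC s

lemma integrableOn_Ioc_of_memLp (ht0 : 0 ≤ t) (htT : t ≤ T) {w : ℝ → Vec m}
    (hw : MemLp w 2 (volume.restrict (Icc (0:ℝ) T))) :
    IntegrableOn w (Ioc 0 t) volume := by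
  haveI : Fact ((volume : Measure ℝ) (Icc (0:ℝ) T) < ⊤) := ⟨measure_Icc_lt_top⟩
  have h1 : Integrable w (volume.restrict (Icc (0:ℝ) T)) :=
    memLp_one_iff_integrable.mp (hw.mono_exponent (by norm_num))
  have h2 : IntegrableOn w (Icc 0 T) volume := h1
  exact h2.mono_set ((Set.Ioc_subset_Icc_self).trans (Set.Icc_subset_Icc_right htT))

lemma intervalIntegrable_inner (ht0 : 0 ≤ t) {w : ℝ → Vec m}
    (hw : IntegrableOn w (Ioc 0 t) volume) {g : ℝ → Vec m} (hg : Continuous g) :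
    IntervalIntegrable (fun s => ⟪w s, g s⟫) volume 0 t := by
  rw [intervalIntegrable_iff_integrableOn_Ioc_of_le ht0]
  obtain ⟨K, hK⟩ := (isCompact_Icc (a := (0:ℝ)) (b := t)).exists_bound_of_continuousOn
    hg.continuousOn
  refine Integrable.mono' (hw.norm.const_mul K)
    ((hw.aestronglyMeasurable).inner (hg.aestronglyMeasurable.restrict)) ?_
  refine (ae_restrict_iff' measurableSet_Ioc).2 (ae_of_all _ fun s hs => ?_)
  calc ‖⟪w s, g s⟫‖ ≤ ‖w s‖ * ‖g s‖ := by
        rw [Real.norm_eq_abs]; exact abs_real_inner_le_norm _ _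
    _ ≤ ‖w s‖ * K := mul_le_mul_of_nonneg_left (hK s (Set.Ioc_subset_Icc_self hs)) (norm_nonneg _)
    _ = K * ‖w s‖ := mul_comm _ _

lemma continuous_matVec_pair :
    Continuous (fun p : Matrix (Fin d) (Fin m) ℝ × Vec m => matVec p.1 p.2) := by
  have : Continuous (fun p : Matrix (Fin d) (Fin m) ℝ × Vec m =>
      (fun i => ∑ j, p.1 i j * p.2 j : Fin d → ℝ)) := by
    refine continuous_pi fun i => ?_
    refine continuous_finset_sum _ fun j _ => ?_
    exact ((continuous_apply j).comp ((continuous_apply i).comp continuous_fst)).mul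
      ((PiLp.continuous_apply 2 _ j).comp continuous_snd)
  exact (PiLp.continuous_toLp 2 (fun _ : Fin d => ℝ)).comp this

lemma continuous_frobNorm_comp {A : ℝ → Matrix (Fin d) (Fin m) ℝ} (hA : Continuous A) :
    Continuous (fun s => frobNorm (A s)) := by
  apply Real.continuous_sqrt.comp
  refine continuous_finset_sum _ fun i _ => continuous_finset_sum _ fun j _ => ?_
  exact ((continuous_apply j).comp ((continuous_apply i).comp hA)).pow 2

lemma intervalIntegrable_matVec (ht0 : 0 ≤ t) {w : ℝ → Vec m}
    (hw : IntegrableOn w (Ioc 0 t) volume)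
    {A : ℝ → Matrix (Fin d) (Fin m) ℝ} (hA : Continuous A) :
    IntervalIntegrable (fun s => matVec (A s) (w s)) volume 0 t := by
  rw [intervalIntegrable_iff_integrableOn_Ioc_of_le ht0]
  obtain ⟨K, hK⟩ := (isCompact_Icc (a := (0:ℝ)) (b := t)).exists_bound_of_continuousOn
    (continuous_frobNorm_comp hA).continuousOn
  refine Integrable.mono' (hw.norm.const_mul (Real.sqrt d * K))
    (continuous_matVec_pair.comp_aestronglyMeasurable
      ((hA.aestronglyMeasurable.restrict).prodMk hw.aestronglyMeasurable)) ?_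
  refine (ae_restrict_iff' measurableSet_Ioc).2 (ae_of_all _ fun s hs => ?_)
  have hKs : frobNorm (A s) ≤ K :=
    le_trans (le_abs_self _) (hK s (Set.Ioc_subset_Icc_self hs))
  calc ‖matVec (A s) (w s)‖ ≤ Real.sqrt d * (frobNorm (A s) * ‖w s‖) := norm_matVec_le _ _
    _ ≤ Real.sqrt d * (K * ‖w s‖) := by
        refine mul_le_mul_of_nonneg_left
          (mul_le_mul_of_nonneg_right hKs (norm_nonneg _)) (Real.sqrt_nonneg _)
    _ = Real.sqrt d * K * ‖w s‖ := by ring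

lemma intervalIntegral_component {F : ℝ → Vec d} (hF : IntervalIntegrable F volume 0 t)
    (i : Fin d) :
    (∫ s in (0:ℝ)..t, F s) i = ∫ s in (0:ℝ)..t, F s i := by
  have := (EuclideanSpace.proj (𝕜 := ℝ) i).intervalIntegral_comp_comm hF
  simpa using this.symm

lemma memℒp_indicator_of_continuous (ht0 : 0 ≤ t) {r : ℝ → Vec m} (hr : Continuous r) :
    MemLp ((Ioc (0:ℝ) t).indicator r) 2 (volume.restrict (Icc (0:ℝ) T)) := by
  haveI : Fact ((volume : Measure ℝ) (Icc (0:ℝ) T) < ⊤) := ⟨measure_Icc_lt_top⟩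
  obtain ⟨K, hK⟩ := (isCompact_Icc (a := (0:ℝ)) (b := t)).exists_bound_of_continuousOn
    hr.continuousOn
  have hK0 : 0 ≤ K := le_trans (norm_nonneg _) (hK 0 ⟨le_refl _, ht0⟩)
  refine MemLp.of_bound
    ((hr.aestronglyMeasurable.restrict).indicator measurableSet_Ioc) K
    (ae_of_all _ fun s => ?_)
  by_cases hs : s ∈ Ioc (0:ℝ) t
  · rw [Set.indicator_of_mem hs]; exact hK s (Set.Ioc_subset_Icc_self hs)
  · rw [Set.indicator_of_notMem hs]; simpa using hK0

end S17

open scoped RealInnerProductSpace in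
/-- closedness of the controlled equation under uniform convergence of paths
and weak `L²` convergence of controls: if `xⁿ → x` uniformly, `uⁿ ∈ U_T(xⁿ)` and `uⁿ → u`
weakly in `L²([0,T],ℝ^m)`, then `u ∈ U_T(x)`. -/
theorem stmt_17 {d m : ℕ} (hd : 0 < d) (hm : 0 < m) {τ T : ℝ} (hτ : 0 < τ) (hT : 0 < T)
    (h : -τ ≤ T)
    (b : Hist τ d → Vec d) (σ' : Hist τ d → Matrix (Fin d) (Fin m) ℝ)
    {κ₁ : ℝ} (hκ₁ : 0 < κ₁) (hlip : LipCoeff b σ' κ₁)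
    (xn : ℕ → Traj τ T d) (x : Traj τ T d)
    -- uniform convergence `xⁿ → x` (convergence in `C([-τ,T],ℝ^d)`)
    (hxn : Filter.Tendsto xn Filter.atTop (nhds x))
    (un : ℕ → ℝ → Vec m) (u : ℝ → Vec m)
    (hun : ∀ n : ℕ, un n ∈ controls h b σ' (xn n))
    (huL2 : MemLp u 2 (volume.restrict (Icc 0 T)))
    -- weak convergence `uⁿ → u` in `L²([0,T],ℝ^m)`
    (hweak : ∀ g : ℝ → Vec m, MemLp g 2 (volume.restrict (Icc 0 T)) →
      Filter.Tendsto (fun n => ∫ s in (0:ℝ)..T, ⟪un n s, g s⟫) Filter.atTop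
        (nhds (∫ s in (0:ℝ)..T, ⟪u s, g s⟫))) :
    u ∈ controls h b σ' x := by
  classical
  have hκ0 : (0:ℝ) ≤ κ₁ := hκ₁.le
  have hT0 : (0:ℝ) ≤ T := hT.le
  haveI : Fact ((volume : Measure ℝ) (Icc (0:ℝ) T) < ⊤) := ⟨measure_Icc_lt_top⟩
  have hdist : Filter.Tendsto (fun n => dist (xn n) x) Filter.atTop (nhds 0) :=
    tendsto_iff_dist_tendsto_zero.mp hxn
  -- uniform `L²` bound on the controls, from Banach–Steinhaus
  obtain ⟨C, hC⟩ : ∃ C : ℝ, ∀ n, ‖((hun n).1).toLp (un n)‖ ≤ C := by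
    have hpt : ∀ f : Lp (Vec m) 2 (volume.restrict (Icc (0:ℝ) T)),
        ∃ C : ℝ, ∀ n : ℕ, ‖(innerSL ℝ (((hun n).1).toLp (un n))) f‖ ≤ C := by
      intro f
      obtain ⟨C, hCb⟩ := ((hweak _ (Lp.memLp f)).norm).bddAbove_range
      refine ⟨C, fun n => ?_⟩
      have he : (innerSL ℝ (((hun n).1).toLp (un n))) f = ∫ s in (0:ℝ)..T, ⟪un n s, f s⟫ :=
        S17.inner_toLp_left hT0 (hun n).1 f
      rw [he]
      exact hCb (Set.mem_range_self n)
    obtain ⟨C', hC'⟩ := banach_steinhaus hpt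
    refine ⟨C', fun n => ?_⟩
    have := hC' n
    rwa [innerSL_apply_norm] at this
  have hC0 : 0 ≤ C := le_trans (norm_nonneg _) (hC 0)
  set D : ℝ :=
    (measureUnivNNReal (volume.restrict (Icc (0:ℝ) T)) : ℝ) ^ ((2:ℝ≥0∞).toReal⁻¹) with hD
  have hD0 : 0 ≤ D := Real.rpow_nonneg (NNReal.coe_nonneg _) _
  refine ⟨huL2, fun t ht => ?_⟩
  obtain ⟨ht0, htT⟩ := ht
  -- continuity of coefficients along paths
  have hbx : Continuous (fun s => b (seg h x s)) := S17.continuous_b_seg hκ0 hlip h x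
  have hbxn : ∀ n, Continuous (fun s => b (seg h (xn n) s)) :=
    fun n => S17.continuous_b_seg hκ0 hlip h (xn n)
  have hσx : Continuous (fun s => σ' (seg h x s)) := S17.continuous_σ_seg hκ0 hlip h x
  have hσxn : ∀ n, Continuous (fun s => σ' (seg h (xn n) s)) :=
    fun n => S17.continuous_σ_seg hκ0 hlip h (xn n)
  -- integrability
  have hunInt : ∀ n, IntegrableOn (un n) (Ioc 0 t) volume :=
    fun n => S17.integrableOn_Ioc_of_memLp ht0 htT (hun n).1
  have huInt : IntegrableOn u (Ioc 0 t) volume := S17.integrableOn_Ioc_of_memLp ht0 htT huL2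
  have hAnInt : ∀ n, IntervalIntegrable
      (fun s => matVec (σ' (seg h (xn n) s)) (un n s)) volume 0 t :=
    fun n => S17.intervalIntegrable_matVec ht0 (hunInt n) (hσxn n)
  have hIuInt : IntervalIntegrable (fun s => matVec (σ' (seg h x s)) (u s)) volume 0 t :=
    S17.intervalIntegrable_matVec ht0 huInt hσx
  -- the sequence of integrals, from the controlled equations
  set An : ℕ → Vec d :=
    fun n => ∫ s in (0:ℝ)..t, matVec (σ' (seg h (xn n) s)) (un n s) with hAn
  have hAneq : ∀ n, An n
      = ev h (xn n) t - ev h (xn n) 0 - ∫ s in (0:ℝ)..t, b (seg h (xn n) s) := by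
    intro n
    rw [hAn]
    rw [(hun n).2 t ⟨ht0, htT⟩]
    abel
  -- convergence of evaluations
  have hev : ∀ r : ℝ, Filter.Tendsto (fun n => ev h (xn n) r) Filter.atTop
      (nhds (ev h x r)) := by
    intro r
    rw [tendsto_iff_dist_tendsto_zero]
    refine squeeze_zero (fun n => dist_nonneg) (fun n => ?_) hdist
    exact ContinuousMap.dist_apply_le_dist _
  -- convergence of the drift integrals
  have hIb : Filter.Tendsto (fun n => ∫ s in (0:ℝ)..t, b (seg h (xn n) s)) Filter.atTop
      (nhds (∫ s in (0:ℝ)..t, b (seg h x s))) := by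
    rw [tendsto_iff_dist_tendsto_zero]
    have hbound : ∀ n, dist (∫ s in (0:ℝ)..t, b (seg h (xn n) s))
        (∫ s in (0:ℝ)..t, b (seg h x s)) ≤ Real.sqrt κ₁ * dist (xn n) x * |t| := by
      intro n
      rw [dist_eq_norm, ← intervalIntegral.integral_sub
        ((hbxn n).intervalIntegrable 0 t) (hbx.intervalIntegrable 0 t)]
      have := intervalIntegral.norm_integral_le_of_norm_le_const
        (C := Real.sqrt κ₁ * dist (xn n) x)
        (f := fun s => b (seg h (xn n) s) - b (seg h x s)) (a := (0:ℝ)) (b := t) ?_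
      · simpa using this
      · intro s _
        refine (S17.b_lip hκ0 hlip _ _).trans ?_
        exact mul_le_mul_of_nonneg_left (S17.norm_seg_sub_seg h (xn n) x s)
          (Real.sqrt_nonneg _)
    refine squeeze_zero (fun n => dist_nonneg) hbound ?_
    have := (hdist.const_mul (Real.sqrt κ₁)).mul_const |t|
    simpa [mul_comm, mul_assoc] using this
  -- convergence of `An` to the path limit
  have hAnlim : Filter.Tendsto An Filter.atTop
      (nhds (ev h x t - ev h x 0 - ∫ s in (0:ℝ)..t, b (seg h x s))) := by
    refine (((hev t).sub (hev 0)).sub hIb).congr fun n => (hAneq n).symm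
  -- identify the limit componentwise
  have hkey : ∀ i : Fin d,
      (ev h x t - ev h x 0 - ∫ s in (0:ℝ)..t, b (seg h x s)) i
      = (∫ s in (0:ℝ)..t, matVec (σ' (seg h x s)) (u s)) i := by
    intro i
    -- continuous row functions
    have hrowx : Continuous (fun s => S17.row (σ' (seg h x s)) i) :=
      S17.continuous_row_σ_seg hκ0 hlip h x i
    have hrown : ∀ n, Continuous
        (fun s => S17.row (σ' (seg h (xn n) s) - σ' (seg h x s)) i) := by
      intro n
      have : (fun s => S17.row (σ' (seg h (xn n) s) - σ' (seg h x s)) i)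
          = fun s => S17.row (σ' (seg h (xn n) s)) i - S17.row (σ' (seg h x s)) i := rfl
      rw [this]
      exact (S17.continuous_row_σ_seg hκ0 hlip h (xn n) i).sub hrowx
    -- splitting of the component of `An`
    have hAi : ∀ n, An n i
        = (∫ s in (0:ℝ)..t, ⟪un n s, S17.row (σ' (seg h x s)) i⟫)
          + ∫ s in (0:ℝ)..t, ⟪un n s, S17.row (σ' (seg h (xn n) s) - σ' (seg h x s)) i⟫ := by
      intro n
      show (∫ s in (0:ℝ)..t, matVec (σ' (seg h (xn n) s)) (un n s)) i = _
      rw [S17.intervalIntegral_component (hAnInt n) i]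
      have h1 : ∀ s, matVec (σ' (seg h (xn n) s)) (un n s) i
          = ⟪un n s, S17.row (σ' (seg h x s)) i⟫
            + ⟪un n s, S17.row (σ' (seg h (xn n) s) - σ' (seg h x s)) i⟫ := by
        intro s
        rw [S17.matVec_apply, ← inner_add_right]
        congr 1
        ext j
        simp [S17.row]
      simp only [h1]
      exact intervalIntegral.integral_add
        (S17.intervalIntegrable_inner ht0 (hunInt n) hrowx)
        (S17.intervalIntegrable_inner ht0 (hunInt n) (hrown n))
    -- weak convergence term
    have hB : Filter.Tendsto
        (fun n => ∫ s in (0:ℝ)..t, ⟪un n s, S17.row (σ' (seg h x s)) i⟫) Filter.atTop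
        (nhds (∫ s in (0:ℝ)..t, ⟪u s, S17.row (σ' (seg h x s)) i⟫)) := by
      have hg : MemLp ((Ioc (0:ℝ) t).indicator (fun s => S17.row (σ' (seg h x s)) i)) 2
          (volume.restrict (Icc (0:ℝ) T)) := S17.memℒp_indicator_of_continuous ht0 hrowx
      have := hweak _ hg
      simp only [S17.intervalIntegral_inner_indicator ht0 htT] at this
      exact this
    -- error term
    have hCbd : ∀ n, ‖∫ s in (0:ℝ)..t,
        ⟪un n s, S17.row (σ' (seg h (xn n) s) - σ' (seg h x s)) i⟫‖
        ≤ C * (D * (Real.sqrt κ₁ * dist (xn n) x)) := by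
      intro n
      set δ : ℝ := Real.sqrt κ₁ * dist (xn n) x with hδdef
      have hδ0 : 0 ≤ δ := mul_nonneg (Real.sqrt_nonneg _) dist_nonneg
      have hrb : ∀ s, ‖S17.row (σ' (seg h (xn n) s) - σ' (seg h x s)) i‖ ≤ δ := by
        intro s
        refine (S17.norm_row_le _ i).trans ((S17.σ_lip hκ0 hlip _ _).trans ?_)
        exact mul_le_mul_of_nonneg_left (S17.norm_seg_sub_seg h (xn n) x s)
          (Real.sqrt_nonneg _)
      have hgb : ∀ s, ‖((Ioc (0:ℝ) t).indicator
          (fun s => S17.row (σ' (seg h (xn n) s) - σ' (seg h x s)) i)) s‖ ≤ δ := by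
        intro s
        by_cases hs : s ∈ Ioc (0:ℝ) t
        · rw [Set.indicator_of_mem hs]; exact hrb s
        · rw [Set.indicator_of_notMem hs]; simpa using hδ0
      have hgmem : MemLp ((Ioc (0:ℝ) t).indicator
          (fun s => S17.row (σ' (seg h (xn n) s) - σ' (seg h x s)) i)) 2
          (volume.restrict (Icc (0:ℝ) T)) :=
        S17.memℒp_indicator_of_continuous ht0 (hrown n)
      have heq : ∫ s in (0:ℝ)..t,
          ⟪un n s, S17.row (σ' (seg h (xn n) s) - σ' (seg h x s)) i⟫
          = ⟪((hun n).1).toLp (un n), hgmem.toLp _⟫ := by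
        rw [S17.inner_toLp_toLp hT0 (hun n).1 hgmem,
          S17.intervalIntegral_inner_indicator ht0 htT]
      rw [heq, Real.norm_eq_abs]
      calc |⟪((hun n).1).toLp (un n), hgmem.toLp _⟫|
          ≤ ‖((hun n).1).toLp (un n)‖ * ‖hgmem.toLp _‖ := abs_real_inner_le_norm _ _
        _ ≤ C * (D * δ) := by
            refine mul_le_mul (hC n) (S17.norm_toLp_le hgmem hδ0 hgb) (norm_nonneg _) hC0
    have hCt : Filter.Tendsto (fun n => ∫ s in (0:ℝ)..t,
        ⟪un n s, S17.row (σ' (seg h (xn n) s) - σ' (seg h x s)) i⟫) Filter.atTop (nhds 0) := by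
      refine squeeze_zero_norm hCbd ?_
      have := (hdist.const_mul (Real.sqrt κ₁)).const_mul D |>.const_mul C
      simpa [mul_comm, mul_assoc] using this
    -- combine: componentwise limit of `An`
    have h2 : Filter.Tendsto (fun n => An n i) Filter.atTop
        (nhds (∫ s in (0:ℝ)..t, ⟪u s, S17.row (σ' (seg h x s)) i⟫)) := by
      have := hB.add hCt
      rw [add_zero] at this
      exact this.congr fun n => (hAi n).symm
    have h1 : Filter.Tendsto (fun n => An n i) Filter.atTop
        (nhds ((ev h x t - ev h x 0 - ∫ s in (0:ℝ)..t, b (seg h x s)) i)) := by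
      have hproj := ((EuclideanSpace.proj (𝕜 := ℝ) i).continuous.tendsto _).comp hAnlim
      simp at hproj
      exact hproj
    have huniq := tendsto_nhds_unique h1 h2
    rw [huniq, S17.intervalIntegral_component hIuInt i]
    refine intervalIntegral.integral_congr fun s _ => ?_
    rw [S17.matVec_apply]
  -- assemble the vector identity
  have hvec : ev h x t - ev h x 0 - (∫ s in (0:ℝ)..t, b (seg h x s))
      = ∫ s in (0:ℝ)..t, matVec (σ' (seg h x s)) (u s) := by ext i; exact hkey i
  rw [sub_sub, sub_eq_iff_eq_add] at hvec
  rw [hvec]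
  abel
end
end
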